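/- Let p, u, v, w, q, z be real numbers. Define F : ℝ³ → Matrix 3 3 ℝ by F(y) = [[p, (u + v·y₁)·e^{−y₁}, v·e^{−y₁}], [(w + z·y₁)·e^{−y₁}, q·e^{−2y₁}, 0], [z·e^{−y₁}, 0, 0]], and let G(y) = (F(y) + F(y)ᵀ)/2 be its symmetric part. Then G(y) is invertible for every y ∈ ℝ³ if and only if q·(v+z) ≠ 0. -/

import Mathlib

open Real Matrix

/-- The tensor `F` of the sigma model on the Manin triple `(4|1)`. -/
noncomputable def F41 (p u v w q z : ℝ) (y : Fin 3 → ℝ) : Matrix (Fin 3) (Fin 3) ℝ :=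
  !![p,                             (u + v * y 0) * exp (-(y 0)), v * exp (-(y 0));
     (w + z * y 0) * exp (-(y 0)),  q * exp (-(2 * y 0)),         0;
     z * exp (-(y 0)),              0,                            0]

/-- The metric of the `(4|1)` sigma model is invertible everywhere iff `q·(v+z) ≠ 0`. -/
theorem metric41_invertible_iff (p u v w q z : ℝ) :
    (∀ y : Fin 3 → ℝ,
        IsUnit ((1 / 2 : ℝ) • (F41 p u v w q z y + (F41 p u v w q z y)ᵀ))) ↔
      q * (v + z) ≠ 0 := by
  have key : ∀ y : Fin 3 → ℝ,
      ((1 / 2 : ℝ) • (F41 p u v w q z y + (F41 p u v w q z y)ᵀ)).det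
        = -(q * (v + z) ^ 2 / 4) * exp (-(y 0)) ^ 4 := by
    intro y
    have he : exp (-(2 * y 0)) = exp (-(y 0)) ^ 2 := by
      rw [sq, ← Real.exp_add]; ring_nf
    have hm : (1 / 2 : ℝ) • (F41 p u v w q z y + (F41 p u v w q z y)ᵀ)
        = !![p, ((u + w) + (v + z) * y 0) / 2 * exp (-(y 0)), (v + z) / 2 * exp (-(y 0));
             ((u + w) + (v + z) * y 0) / 2 * exp (-(y 0)), q * exp (-(y 0)) ^ 2, 0;
             (v + z) / 2 * exp (-(y 0)), 0, 0] := by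
      ext i j
      fin_cases i <;> fin_cases j <;>
        simp [F41, Matrix.smul_apply, Matrix.add_apply, Matrix.transpose_apply,
          Matrix.vecHead, Matrix.vecTail, he] <;> ring
    rw [hm, Matrix.det_fin_three]
    norm_num [Matrix.vecHead, Matrix.vecTail, Matrix.cons_val_two, Matrix.cons_val_one, Matrix.cons_val_zero]
    ring
  simp only [Matrix.isUnit_iff_isUnit_det, isUnit_iff_ne_zero, key]
  constructor
  · intro h
    have := h 0
    intro hq
    rcases mul_eq_zero.1 hq with h1 | h2
    · simp [h1] at this
    · simp [h2] at this
  · intro hq y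
    have h1 : q ≠ 0 := fun h => hq (by simp [h])
    have h2 : v + z ≠ 0 := fun h => hq (by simp [h])
    have h3 : exp (-(y 0)) ≠ 0 := Real.exp_ne_zero _
    exact mul_ne_zero (neg_ne_zero.2 (div_ne_zero (mul_ne_zero h1 (pow_ne_zero 2 h2))
      (by norm_num))) (pow_ne_zero 4 h3)
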